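/- arXiv:1006.5415 — 5 statements merged into one kernel-verified Lean document; each statement's English description precedes it below -/
import Mathlib

section
/- Under hypothesis (i) (L is strictly increasing and r_i < ∫_Ω K_i(α) L(∞) dP(α) for all i, where L(∞) := lim_{x→+∞} L(x) ∈ (0, +∞]), every solution n(t) of the system dn_i/dt = [r_i − ∫_Ω K_i(α) L(Σ_{j=1}^N B_j(α) n_j(t)) dP(α)] n_i(t) with nonnegative initial data is uniformly bounded in time: there exists M > 0 such that ‖n(t)‖ ≤ M for all t ≥ 0. -/
open MeasureTheory Filter Topology ENNReal

/-- Sign preservation for scalar linear-type ODEs with locally bounded coefficient. -/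
lemma aux_nonneg {f g : ℝ → ℝ}
    (hf : ∀ t, 0 ≤ t → HasDerivAt f (g t * f t) t)
    (h0 : 0 ≤ f 0)
    (hb : ∀ T : ℝ, 0 < T → ∃ M, ∀ t ∈ Set.Icc (0:ℝ) T, |g t| ≤ M) :
    ∀ t, 0 ≤ t → 0 ≤ f t := by
  intro t1 ht1
  by_contra hneg
  push_neg at hneg
  have ht1pos : 0 < t1 := by
    rcases eq_or_lt_of_le ht1 with h | h
    · exact absurd h0 (by rw [← h] at hneg; linarith)
    · exact h
  obtain ⟨M, hM⟩ := hb t1 ht1pos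
  have hcont : ContinuousOn f (Set.Icc 0 t1) := fun x hx =>
    ((hf x hx.1).continuousAt).continuousWithinAt
  have h0mem : (0:ℝ) ∈ Set.Icc (f t1) (f 0) := ⟨hneg.le, h0⟩
  obtain ⟨t0, ht0mem, ht0⟩ := intermediate_value_Icc' ht1 hcont h0mem
  have hsub : Set.Icc t0 t1 ⊆ Set.Icc 0 t1 := Set.Icc_subset_Icc ht0mem.1 le_rfl
  have key := norm_le_gronwallBound_of_norm_deriv_right_le
    (f := f) (f' := fun t => g t * f t) (δ := 0) (K := M) (ε := 0) (a := t0) (b := t1)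
    (hcont.mono hsub)
    (fun x hx => (hf x (le_trans ht0mem.1 hx.1)).hasDerivWithinAt)
    (by simp [ht0])
    (fun x hx => by
      have hgx : |g x| ≤ M := hM x ⟨le_trans ht0mem.1 hx.1, hx.2.le⟩
      have : ‖g x * f x‖ = |g x| * ‖f x‖ := by
        simp [Real.norm_eq_abs, abs_mul]
      rw [this, add_zero]
      exact mul_le_mul_of_nonneg_right hgx (norm_nonneg _))
  have hfin := key t1 ⟨ht0mem.2, le_rfl⟩
  rw [gronwallBound_ε0_δ0, Real.norm_eq_abs] at hfin
  have := abs_nonneg (f t1)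
  have : f t1 = 0 := abs_eq_zero.mp (le_antisymm hfin (abs_nonneg _))
  linarith

/-- If the derivative is nonpositive whenever `f ≥ R`, then `f` stays below `max (f 0) R`. -/
lemma aux_bounded {f F : ℝ → ℝ} {R : ℝ}
    (hf : ∀ t, 0 ≤ t → HasDerivAt f (F t) t)
    (hR : ∀ t, 0 ≤ t → R ≤ f t → F t ≤ 0) :
    ∀ t, 0 ≤ t → f t ≤ max (f 0) R := by
  intro t1 ht1
  by_contra hgt
  push_neg at hgt
  have ht1pos : 0 < t1 := by
    rcases eq_or_lt_of_le ht1 with h | h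
    · exfalso; rw [← h] at hgt
      exact absurd (le_max_left (f 0) R) (not_le.mpr hgt)
    · exact h
  set c : ℝ := (max (f 0) R + f t1) / 2 with hc
  have hc1 : max (f 0) R < c := by
    simp only [hc]; linarith
  have hc2 : c < f t1 := by
    simp only [hc]; linarith
  have hcont : ContinuousOn f (Set.Icc 0 t1) := fun x hx =>
    ((hf x hx.1).continuousAt).continuousWithinAt
  set S : Set ℝ := Set.Icc 0 t1 ∩ f ⁻¹' Set.Iic c with hS
  have hSclosed : IsClosed S :=
    hcont.preimage_isClosed_of_isClosed isClosed_Icc isClosed_Iic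
  have hScomp : IsCompact S := isCompact_Icc.of_isClosed_subset hSclosed Set.inter_subset_left
  have hS0 : (0:ℝ) ∈ S :=
    ⟨⟨le_rfl, ht1pos.le⟩, le_of_lt (lt_of_le_of_lt (le_max_left _ _) hc1)⟩
  set t0 : ℝ := sSup S with ht0def
  have ht0S : t0 ∈ S := hScomp.sSup_mem ⟨0, hS0⟩
  have ht0mem : t0 ∈ Set.Icc (0:ℝ) t1 := ht0S.1
  have hft0 : f t0 ≤ c := ht0S.2
  have ht0lt : t0 < t1 := by
    rcases eq_or_lt_of_le ht0mem.2 with h | h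
    · exfalso; rw [h] at hft0; linarith
    · exact h
  have hbdd : BddAbove S := hScomp.bddAbove
  have hgtR : ∀ x ∈ Set.Ioo t0 t1, c < f x := by
    intro x hx
    by_contra hle
    push_neg at hle
    have hxS : x ∈ S := ⟨⟨le_trans ht0mem.1 hx.1.le, hx.2.le⟩, hle⟩
    exact absurd (le_csSup hbdd hxS) (not_le.mpr hx.1)
  have hanti : AntitoneOn f (Set.Icc t0 t1) := by
    apply antitoneOn_of_deriv_nonpos (convex_Icc t0 t1)
      (hcont.mono (Set.Icc_subset_Icc ht0mem.1 le_rfl))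
    · intro x hx
      rw [interior_Icc] at hx
      exact ((hf x (le_trans ht0mem.1 hx.1.le)).differentiableAt).differentiableWithinAt
    · intro x hx
      rw [interior_Icc] at hx
      have hx0 : 0 ≤ x := le_trans ht0mem.1 hx.1.le
      rw [(hf x hx0).deriv]
      apply hR x hx0
      have := hgtR x hx
      have : R ≤ c := le_trans (le_max_right _ _) hc1.le
      linarith [hgtR x hx]
  have := hanti ⟨le_rfl, ht0lt.le⟩ ⟨ht0lt.le, le_rfl⟩ ht0lt.le
  linarith

/-- A.e. bound from `Memℒp` with exponent `⊤`. -/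
lemma aux_ae_bound {Ω : Type*} [MeasurableSpace Ω] {P : Measure Ω} {f : Ω → ℝ}
    (hf : MemLp f ⊤ P) : ∃ D : ℝ, 0 ≤ D ∧ ∀ᵐ α ∂P, |f α| ≤ D := by
  refine ⟨(eLpNormEssSup f P).toReal, ENNReal.toReal_nonneg, ?_⟩
  have hlt : eLpNormEssSup f P < ⊤ := by
    have := hf.eLpNorm_lt_top
    rwa [eLpNorm_exponent_top] at this
  filter_upwards [ae_le_eLpNormEssSup (f := f) (μ := P)] with α hα
  have h2 : ((‖f α‖₊ : ℝ≥0∞)).toReal ≤ (eLpNormEssSup f P).toReal :=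
    ENNReal.toReal_mono hlt.ne hα
  simpa [Real.norm_eq_abs] using h2

/-- Integrability of `K · (L ∘ e)` when `e` is a.e. bounded. -/
lemma aux_integrable {Ω : Type*} [MeasurableSpace Ω] {P : Measure Ω}
    {K : Ω → ℝ} {L : ℝ → ℝ} (hL : Continuous L) (hK1 : Integrable K P)
    {e : Ω → ℝ} (he : AEStronglyMeasurable e P) {ρ : ℝ}
    (hbd : ∀ᵐ α ∂P, |e α| ≤ ρ) :
    Integrable (fun α => K α * L (e α)) P := by
  obtain ⟨ML, hML⟩ := (isCompact_Icc (a := -ρ) (b := ρ)).exists_bound_of_continuousOn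
    hL.continuousOn
  refine (hK1.norm.const_mul ML).mono'
    (hK1.aestronglyMeasurable.mul (hL.comp_aestronglyMeasurable he)) ?_
  filter_upwards [hbd] with α hα
  have hmem : e α ∈ Set.Icc (-ρ) ρ := by
    rcases abs_le.mp hα with ⟨h1, h2⟩; exact ⟨h1, h2⟩
  have h1 : ‖L (e α)‖ ≤ ML := hML _ hmem
  calc ‖K α * L (e α)‖ = ‖K α‖ * ‖L (e α)‖ := norm_mul _ _
    _ ≤ ‖K α‖ * ML := mul_le_mul_of_nonneg_left h1 (norm_nonneg _)
    _ = ML * ‖K α‖ := mul_comm _ _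

/-- Uniform bound on integrals `∫ K · (L ∘ e)` over a.e. `ρ`-bounded `e`. -/
lemma aux_bound_integral {Ω : Type*} [MeasurableSpace Ω] {P : Measure Ω}
    {K : Ω → ℝ} {L : ℝ → ℝ} (hL : Continuous L) (hK1 : Integrable K P) (ρ : ℝ) :
    ∃ Mb : ℝ, ∀ e : Ω → ℝ, (∀ᵐ α ∂P, |e α| ≤ ρ) → |∫ α, K α * L (e α) ∂P| ≤ Mb := by
  obtain ⟨ML, hML⟩ := (isCompact_Icc (a := -ρ) (b := ρ)).exists_bound_of_continuousOn
    hL.continuousOn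
  refine ⟨ML * ∫ α, ‖K α‖ ∂P, fun e hbd => ?_⟩
  rw [← Real.norm_eq_abs]
  calc ‖∫ α, K α * L (e α) ∂P‖ ≤ ∫ α, ML * ‖K α‖ ∂P := by
        apply norm_integral_le_of_norm_le (hK1.norm.const_mul ML)
        filter_upwards [hbd] with α hα
        have hmem : e α ∈ Set.Icc (-ρ) ρ := by
          rcases abs_le.mp hα with ⟨h1, h2⟩; exact ⟨h1, h2⟩
        calc ‖K α * L (e α)‖ = ‖K α‖ * ‖L (e α)‖ := norm_mul _ _
          _ ≤ ‖K α‖ * ML := mul_le_mul_of_nonneg_left (hML _ hmem) (norm_nonneg _)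
          _ = ML * ‖K α‖ := mul_comm _ _
    _ = ML * ∫ α, ‖K α‖ ∂P := integral_const_mul ML _

/-- Under the strict competition hypothesis (i), every solution of the generalized
competitive system with nonnegative initial data is uniformly bounded in time. -/
theorem solutions_uniformly_bounded
    {Ω : Type*} [MeasurableSpace Ω] (P : Measure Ω) {N : ℕ}
    (L : ℝ → ℝ) (hLC1 : ContDiff ℝ 1 L) (hLnonneg : ∀ x : ℝ, 0 ≤ x → 0 ≤ L x)
    (r : Fin N → ℝ) (K B : Fin N → Ω → ℝ)
    (hKnonneg : ∀ i α, 0 ≤ K i α) (hBnonneg : ∀ i α, 0 ≤ B i α)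
    (hKL1 : ∀ i, Integrable (K i) P) (hKLinf : ∀ i, MemLp (K i) ⊤ P)
    (hBL1 : ∀ i, Integrable (B i) P) (hBLinf : ∀ i, MemLp (B i) ⊤ P)
    (C : Fin N → ℝ) (hC : ∀ i, 0 < C i) (hBK : ∀ i α, B i α = C i * K i α)
    -- (i) strict competition
    (hLmono : StrictMono L) (Linf : ℝ≥0∞) (hLinfpos : 0 < Linf)
    (hLinf : Tendsto (fun x => (L x : EReal)) atTop (𝓝 (Linf : EReal)))
    (hstrict : ∀ i, (r i : EReal) <
      ((∫⁻ α, ENNReal.ofReal (K i α) * Linf ∂P : ℝ≥0∞) : EReal))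
    -- a solution with nonnegative initial data
    (n : ℝ → Fin N → ℝ) (h0 : ∀ i, 0 ≤ n 0 i)
    (hsol : ∀ t : ℝ, 0 ≤ t → ∀ i, HasDerivAt (fun s => n s i)
      ((r i - ∫ α, K i α * L (∑ j, B j α * n t j) ∂P) * n t i) t) :
    ∃ M : ℝ, 0 < M ∧ ∀ t : ℝ, 0 ≤ t → ‖n t‖ ≤ M := by
  have hLcont : Continuous L := hLC1.continuous
  -- a.e. bounds for B j and K i
  have hDBex : ∀ j, ∃ D : ℝ, 0 ≤ D ∧ ∀ᵐ α ∂P, |B j α| ≤ D := fun j => aux_ae_bound (hBLinf j)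
  choose DB hDB0 hDBae using hDBex
  have hDKex : ∀ i, ∃ D : ℝ, 0 ≤ D ∧ ∀ᵐ α ∂P, |K i α| ≤ D := fun i => aux_ae_bound (hKLinf i)
  choose DK hDK0 hDKae using hDKex
  have hDBall : ∀ᵐ α ∂P, ∀ j, |B j α| ≤ DB j := ae_all_iff.mpr hDBae
  -- measurability of sums
  have hsumMeas : ∀ t, AEStronglyMeasurable (fun α => ∑ j, B j α * n t j) P := by
    intro t
    exact Finset.aestronglyMeasurable_fun_sum Finset.univ
      (fun j _ => (hBL1 j).aestronglyMeasurable.mul_const (n t j))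
  -- continuity of components
  have hcont : ∀ i, ContinuousOn (fun t => n t i) (Set.Ici (0:ℝ)) := fun i x hx =>
    ((hsol x hx i).continuousAt).continuousWithinAt
  -- Step 1 : nonnegativity of solutions
  have hnonneg : ∀ t, 0 ≤ t → ∀ i, 0 ≤ n t i := by
    have key : ∀ i, ∀ t, 0 ≤ t → 0 ≤ n t i := by
      intro i
      apply aux_nonneg (g := fun t => r i - ∫ α, K i α * L (∑ j, B j α * n t j) ∂P)
        (f := fun t => n t i)
      · intro t ht; exact hsol t ht i
      · exact h0 i
      · -- local boundedness of the coefficient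
        intro T hT
        have hnc : ContinuousOn n (Set.Icc 0 T) := by
          apply continuousOn_pi.mpr
          intro j
          exact (hcont j).mono (fun x hx => hx.1)
        obtain ⟨A, hA⟩ := isCompact_Icc.exists_bound_of_continuousOn hnc
        set ρ : ℝ := ∑ j, DB j * A with hρ
        obtain ⟨Mb, hMb⟩ := aux_bound_integral (K := K i) hLcont (hKL1 i) ρ
        refine ⟨|r i| + Mb, fun t ht => ?_⟩
        have hbd : ∀ᵐ α ∂P, |∑ j, B j α * n t j| ≤ ρ := by
          filter_upwards [hDBall] with α hα
          calc |∑ j, B j α * n t j| ≤ ∑ j, |B j α * n t j| :=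
                Finset.abs_sum_le_sum_abs _ _
            _ ≤ ∑ j, DB j * A := by
                apply Finset.sum_le_sum
                intro j _
                rw [abs_mul]
                apply mul_le_mul (hα j) _ (abs_nonneg _) (hDB0 j)
                calc |n t j| = ‖n t j‖ := (Real.norm_eq_abs _).symm
                  _ ≤ ‖n t‖ := norm_le_pi_norm (n t) j
                  _ ≤ A := hA t ht
        have := hMb _ hbd
        calc |r i - ∫ α, K i α * L (∑ j, B j α * n t j) ∂P|
            ≤ |r i| + |∫ α, K i α * L (∑ j, B j α * n t j) ∂P| := abs_sub _ _
          _ ≤ |r i| + Mb := by linarith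
    intro t ht i; exact key i t ht
  -- Step 2 : thresholds R i with r i ≤ ∫ K i · L (C i K i R i)
  have hthresh : ∀ i, ∃ R : ℝ, 0 ≤ R ∧
      r i ≤ ∫ α, K i α * L (C i * K i α * R) ∂P := by
    intro i
    rcases le_or_gt (r i) 0 with hr | hr
    · refine ⟨0, le_rfl, le_trans hr (integral_nonneg ?_)⟩
      intro α
      exact mul_nonneg (hKnonneg i α)
        (hLnonneg _ (mul_nonneg (mul_nonneg (hC i).le (hKnonneg i α)) le_rfl))
    · -- MCT argument
      set F : ℕ → Ω → ℝ≥0∞ := fun m α => ENNReal.ofReal (K i α * L (C i * K i α * m))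
        with hF
      have hargnn : ∀ (m : ℕ) α, 0 ≤ C i * K i α * (m:ℝ) := fun m α =>
        mul_nonneg (mul_nonneg (hC i).le (hKnonneg i α)) (Nat.cast_nonneg m)
      have hFmono : ∀ α, Monotone fun m => F m α := by
        intro α m m' hmm
        apply ENNReal.ofReal_le_ofReal
        apply mul_le_mul_of_nonneg_left _ (hKnonneg i α)
        exact hLmono.monotone (mul_le_mul_of_nonneg_left (Nat.cast_le.mpr hmm)
          (mul_nonneg (hC i).le (hKnonneg i α)))
      have hFmeas : ∀ m, AEMeasurable (F m) P := by
        intro m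
        apply AEMeasurable.ennreal_ofReal
        exact ((hKL1 i).aestronglyMeasurable.mul
          (hLcont.comp_aestronglyMeasurable
            (((hKL1 i).aestronglyMeasurable.const_mul (C i)).mul_const (m:ℝ)))).aemeasurable
      have hsup : ∀ α, (⨆ m, F m α) = ENNReal.ofReal (K i α) * Linf := by
        intro α
        rcases eq_or_lt_of_le (hKnonneg i α) with h0K | hposK
        · have hK0 : K i α = 0 := h0K.symm
          simp [hF, hK0]
        · have hcpos : 0 < C i * K i α := mul_pos (hC i) hposK
          have hLnn : ∀ m : ℕ, 0 ≤ L (C i * K i α * m) := fun m =>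
            hLnonneg _ (hargnn m α)
          have hstep : ∀ m : ℕ, F m α =
              ENNReal.ofReal (K i α) * ENNReal.ofReal (L (C i * K i α * m)) := fun m =>
            ENNReal.ofReal_mul (hKnonneg i α)
          have hkey : (⨆ m : ℕ, ENNReal.ofReal (L (C i * K i α * m))) = Linf := by
            set c : ℝ := C i * K i α with hcdef
            have hmono2 : Monotone fun m : ℕ => ENNReal.ofReal (L (c * m)) := by
              intro m m' hmm
              exact ENNReal.ofReal_le_ofReal (hLmono.monotone
                (mul_le_mul_of_nonneg_left (Nat.cast_le.mpr hmm) hcpos.le))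
            have hxc : Tendsto (fun m : ℕ => c * m) atTop atTop :=
              Tendsto.const_mul_atTop hcpos tendsto_natCast_atTop_atTop
            have h1 : Tendsto (fun m : ℕ => (L (c * m) : EReal)) atTop (𝓝 (Linf : EReal)) :=
              hLinf.comp hxc
            have htends : Tendsto (fun m : ℕ => ENNReal.ofReal (L (c * m))) atTop (𝓝 Linf) := by
              rcases eq_or_ne Linf ⊤ with htop | hne
              · rw [htop]
                rw [htop, EReal.coe_ennreal_top] at h1
                have h2 : Tendsto (fun m : ℕ => L (c * m)) atTop atTop := by
                  rw [tendsto_atTop]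
                  intro b
                  have := (EReal.tendsto_nhds_top_iff_real.mp h1) b
                  filter_upwards [this] with m hm
                  exact (EReal.coe_lt_coe_iff.mp hm).le
                exact ENNReal.tendsto_ofReal_atTop.comp h2
              · lift Linf to NNReal using hne with x hx
                rw [EReal.coe_nnreal_eq_coe_real] at h1
                have h2 : Tendsto (fun m : ℕ => L (c * m)) atTop (𝓝 (x : ℝ)) :=
                  EReal.tendsto_coe.mp h1
                have h3 := (ENNReal.continuous_ofReal.tendsto (x : ℝ)).comp h2
                simpa [ENNReal.ofReal_coe_nnreal, Function.comp_def] using h3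
            exact tendsto_nhds_unique (tendsto_atTop_iSup hmono2) htends
          calc (⨆ m, F m α)
              = ⨆ m : ℕ, ENNReal.ofReal (K i α) * ENNReal.ofReal (L (C i * K i α * m)) := by
                exact iSup_congr hstep
            _ = ENNReal.ofReal (K i α) * ⨆ m : ℕ, ENNReal.ofReal (L (C i * K i α * m)) :=
                (ENNReal.mul_iSup _ _).symm
            _ = ENNReal.ofReal (K i α) * Linf := by rw [hkey]
      have hMCT : (∫⁻ α, ENNReal.ofReal (K i α) * Linf ∂P) = ⨆ m, ∫⁻ α, F m α ∂P := by
        rw [← lintegral_iSup' hFmeas (Filter.Eventually.of_forall hFmono)]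
        exact lintegral_congr fun α => (hsup α).symm
      have hlt : ENNReal.ofReal (r i) < ∫⁻ α, ENNReal.ofReal (K i α) * Linf ∂P := by
        by_contra hcon
        push_neg at hcon
        have h1 : ((∫⁻ α, ENNReal.ofReal (K i α) * Linf ∂P : ℝ≥0∞) : EReal)
            ≤ ((ENNReal.ofReal (r i) : ℝ≥0∞) : EReal) :=
          EReal.coe_ennreal_le_coe_ennreal_iff.mpr hcon
        rw [EReal.coe_ennreal_ofReal, max_eq_left hr.le] at h1
        exact absurd (hstrict i) (not_lt.mpr h1)
      rw [hMCT, lt_iSup_iff] at hlt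
      obtain ⟨m, hm⟩ := hlt
      have hbd : ∀ᵐ α ∂P, |C i * K i α * (m:ℝ)| ≤ C i * DK i * m := by
        filter_upwards [hDKae i] with α hα
        rw [abs_mul, abs_mul, abs_of_nonneg (hC i).le,
          abs_of_nonneg (Nat.cast_nonneg m : (0:ℝ) ≤ (m:ℝ))]
        exact mul_le_mul_of_nonneg_right
          (mul_le_mul_of_nonneg_left hα (hC i).le) (Nat.cast_nonneg m)
      have hInt : Integrable (fun α => K i α * L (C i * K i α * (m:ℝ))) P :=
        aux_integrable hLcont (hKL1 i)
          (((hKL1 i).aestronglyMeasurable.const_mul (C i)).mul_const (m:ℝ)) hbd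
      have hEq : ∫⁻ α, F m α ∂P
          = ENNReal.ofReal (∫ α, K i α * L (C i * K i α * (m:ℝ)) ∂P) :=
        (ofReal_integral_eq_lintegral_ofReal hInt
          (Filter.Eventually.of_forall fun α =>
            mul_nonneg (hKnonneg i α) (hLnonneg _ (hargnn m α)))).symm
      rw [hEq] at hm
      have hfin : r i < ∫ α, K i α * L (C i * K i α * (m:ℝ)) ∂P :=
        (ENNReal.ofReal_lt_ofReal_iff_of_nonneg hr.le).mp hm
      exact ⟨(m:ℝ), Nat.cast_nonneg m, hfin.le⟩
  choose R hR0 hRle using hthresh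
  -- Step 3 : per-component bound via the derivative-sign argument
  have hcompb : ∀ i, ∀ t, 0 ≤ t → n t i ≤ max (n 0 i) (R i) := by
    intro i
    apply aux_bounded
      (F := fun t => (r i - ∫ α, K i α * L (∑ j, B j α * n t j) ∂P) * n t i)
    · intro t ht; exact hsol t ht i
    · intro t ht hni
      have hIge : r i ≤ ∫ α, K i α * L (∑ j, B j α * n t j) ∂P := by
        refine le_trans (hRle i) ?_
        have int1 : Integrable (fun α => K i α * L (C i * K i α * R i)) P := by
          apply aux_integrable hLcont (hKL1 i)
            (((hKL1 i).aestronglyMeasurable.const_mul (C i)).mul_const (R i))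
            (ρ := C i * DK i * R i)
          filter_upwards [hDKae i] with α hα
          rw [abs_mul, abs_mul, abs_of_nonneg (hC i).le, abs_of_nonneg (hR0 i)]
          exact mul_le_mul_of_nonneg_right
            (mul_le_mul_of_nonneg_left hα (hC i).le) (hR0 i)
        have int2 : Integrable (fun α => K i α * L (∑ j, B j α * n t j)) P := by
          apply aux_integrable hLcont (hKL1 i) (hsumMeas t) (ρ := ∑ j, DB j * n t j)
          filter_upwards [hDBall] with α hα
          calc |∑ j, B j α * n t j| ≤ ∑ j, |B j α * n t j| :=
                Finset.abs_sum_le_sum_abs _ _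
            _ ≤ ∑ j, DB j * n t j := by
                apply Finset.sum_le_sum
                intro j _
                rw [abs_mul, abs_of_nonneg (hnonneg t ht j)]
                exact mul_le_mul_of_nonneg_right (hα j) (hnonneg t ht j)
        apply integral_mono int1 int2
        intro α
        apply mul_le_mul_of_nonneg_left _ (hKnonneg i α)
        apply hLmono.monotone
        calc C i * K i α * R i ≤ C i * K i α * n t i :=
              mul_le_mul_of_nonneg_left hni (mul_nonneg (hC i).le (hKnonneg i α))
          _ = B i α * n t i := by rw [hBK i α]
          _ ≤ ∑ j, B j α * n t j :=
              Finset.single_le_sum (f := fun j => B j α * n t j)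
                (fun j _ => mul_nonneg (hBnonneg j α) (hnonneg t ht j))
                (Finset.mem_univ i)
      exact mul_nonpos_iff.mpr (Or.inr ⟨sub_nonpos.mpr hIge, hnonneg t ht i⟩)
  -- Final assembly
  have hmaxnn : ∀ j, 0 ≤ max (n 0 j) (R j) := fun j => le_trans (h0 j) (le_max_left _ _)
  have hsumnn : 0 ≤ ∑ j, max (n 0 j) (R j) :=
    Finset.sum_nonneg fun j _ => hmaxnn j
  refine ⟨1 + ∑ j, max (n 0 j) (R j), by linarith, ?_⟩
  intro t ht
  have hMnn : (0:ℝ) ≤ 1 + ∑ j, max (n 0 j) (R j) := by linarith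
  rw [pi_norm_le_iff_of_nonneg hMnn]
  intro i
  rw [Real.norm_eq_abs, abs_of_nonneg (hnonneg t ht i)]
  calc n t i ≤ max (n 0 i) (R i) := hcompb i t ht
    _ ≤ ∑ j, max (n 0 j) (R j) :=
        Finset.single_le_sum (fun j _ => hmaxnn j) (Finset.mem_univ i)
    _ ≤ 1 + ∑ j, max (n 0 j) (R j) := by linarith
end

section
/- Assume L is strictly increasing and hypothesis (iv) holds. Then there is at most one Evolutionarily Stable Strategy: if n¹, n² ∈ ℝ_+^N both satisfy the ESS conditions (∫_Ω K_i(α) L(Σ_j B_j(α) n_j) dP(α) = r_i for every i with n_i > 0, and ∫_Ω K_i(α) L(Σ_j B_j(α) n_j) dP(α) ≥ r_i for every i with n_i = 0), then n¹ = n². -/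
open MeasureTheory Filter Topology ENNReal

/-- An a.e. bound for a finite linear combination of a.e. bounded functions. -/
lemma ESS_aux_bound {Ω : Type*} [MeasurableSpace Ω] (P : Measure Ω) {N : ℕ}
    (B : Fin N → Ω → ℝ) (hB : ∀ j, MemLp (B j) ⊤ P) (n : Fin N → ℝ) :
    ∃ M : ℝ, ∀ᵐ α ∂P, |∑ j, B j α * n j| ≤ M := by
  have hbd : ∀ j : Fin N, ∀ᵐ α ∂P, |B j α| ≤ (eLpNormEssSup (B j) P).toReal := by
    intro j
    have h1 := ae_le_eLpNormEssSup (f := B j) (μ := P)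
    have hfin : eLpNormEssSup (B j) P < ⊤ := by
      have := (hB j).2
      simpa [eLpNorm_exponent_top] using this
    filter_upwards [h1] with α hα
    have : (‖B j α‖₊ : ℝ≥0∞) ≤ eLpNormEssSup (B j) P := hα
    have h2 := ENNReal.toReal_mono hfin.ne this
    simpa [Real.norm_eq_abs] using h2
  refine ⟨∑ j, (eLpNormEssSup (B j) P).toReal * |n j|, ?_⟩
  filter_upwards [ae_all_iff.2 hbd] with α hα
  calc |∑ j, B j α * n j| ≤ ∑ j, |B j α * n j| := Finset.abs_sum_le_sum_abs _ _
    _ ≤ ∑ j, (eLpNormEssSup (B j) P).toReal * |n j| := by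
        apply Finset.sum_le_sum
        intro j _
        rw [abs_mul]
        exact mul_le_mul_of_nonneg_right (hα j) (abs_nonneg _)

/-- If `L` is strictly increasing and the non degeneracy hypothesis (iv) holds, then there
is at most one Evolutionarily Stable Strategy in `ℝ_+^N`. -/
theorem ESS_unique
    {Ω : Type*} [MeasurableSpace Ω] (P : Measure Ω) {N : ℕ}
    (L : ℝ → ℝ) (hLC1 : ContDiff ℝ 1 L) (hLnonneg : ∀ x : ℝ, 0 ≤ x → 0 ≤ L x)
    (r : Fin N → ℝ) (K B : Fin N → Ω → ℝ)
    (hKnonneg : ∀ i α, 0 ≤ K i α) (hBnonneg : ∀ i α, 0 ≤ B i α)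
    (hKL1 : ∀ i, Integrable (K i) P) (hKLinf : ∀ i, MemLp (K i) ⊤ P)
    (hBL1 : ∀ i, Integrable (B i) P) (hBLinf : ∀ i, MemLp (B i) ⊤ P)
    (C : Fin N → ℝ) (hC : ∀ i, 0 < C i) (hBK : ∀ i α, B i α = C i * K i α)
    (hLmono : StrictMono L)
    -- (iv) non degeneracy
    (hnondeg : ∀ I : Finset (Fin N), ∀ n m : Fin N → ℝ,
      (∀ i ∉ I, n i = 0) → (∀ i ∉ I, m i = 0) →
      (∀ i ∈ I, r i = ∫ α, K i α * L (∑ j, B j α * n j) ∂P) →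
      (∀ i ∈ I, r i = ∫ α, K i α * L (∑ j, B j α * m j) ∂P) →
      n = m)
    -- two ESS
    (n1 n2 : Fin N → ℝ) (hn1 : ∀ i, 0 ≤ n1 i) (hn2 : ∀ i, 0 ≤ n2 i)
    (hESS1eq : ∀ i, 0 < n1 i → ∫ α, K i α * L (∑ j, B j α * n1 j) ∂P = r i)
    (hESS1ge : ∀ i, n1 i = 0 → r i ≤ ∫ α, K i α * L (∑ j, B j α * n1 j) ∂P)
    (hESS2eq : ∀ i, 0 < n2 i → ∫ α, K i α * L (∑ j, B j α * n2 j) ∂P = r i)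
    (hESS2ge : ∀ i, n2 i = 0 → r i ≤ ∫ α, K i α * L (∑ j, B j α * n2 j) ∂P) :
    n1 = n2 := by
  classical
  set S : Ω → ℝ := fun α => ∑ j, B j α * n1 j with hSdef
  set T : Ω → ℝ := fun α => ∑ j, B j α * n2 j with hTdef
  -- measurability of S, T
  have hSint : Integrable S P :=
    integrable_finset_sum _ (fun j _ => (hBL1 j).mul_const _)
  have hTint : Integrable T P :=
    integrable_finset_sum _ (fun j _ => (hBL1 j).mul_const _)
  have hSmeas : AEStronglyMeasurable S P := hSint.1
  have hTmeas : AEStronglyMeasurable T P := hTint.1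
  -- a.e. bounds for L ∘ S and L ∘ T
  have hLbd : ∀ (n : Fin N → ℝ), ∃ c : ℝ,
      ∀ᵐ α ∂P, ‖L (∑ j, B j α * n j)‖ ≤ c := by
    intro n
    obtain ⟨M, hM⟩ := ESS_aux_bound P B hBLinf n
    obtain ⟨c, hc⟩ := (isCompact_Icc (a := -M) (b := M)).exists_bound_of_continuousOn
      hLC1.continuous.continuousOn
    refine ⟨c, ?_⟩
    filter_upwards [hM] with α hα
    exact hc _ (abs_le.1 hα)
  obtain ⟨cS, hcS⟩ := hLbd n1
  obtain ⟨cT, hcT⟩ := hLbd n2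
  have hLSmeas : AEStronglyMeasurable (fun α => L (S α)) P :=
    hLC1.continuous.comp_aestronglyMeasurable hSmeas
  have hLTmeas : AEStronglyMeasurable (fun α => L (T α)) P :=
    hLC1.continuous.comp_aestronglyMeasurable hTmeas
  -- integrability of the products
  have hint1 : ∀ i, Integrable (fun α => K i α * L (S α)) P := by
    intro i
    have := (hKL1 i).bdd_mul (c := cS) hLSmeas hcS
    simpa [mul_comm] using this
  have hint2 : ∀ i, Integrable (fun α => K i α * L (T α)) P := by
    intro i
    have := (hKL1 i).bdd_mul (c := cT) hLTmeas hcT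
    simpa [mul_comm] using this
  have hintD : ∀ i, Integrable (fun α => K i α * (L (S α) - L (T α))) P := by
    intro i
    have := ((hint1 i).sub (hint2 i))
    simpa [mul_sub, Pi.sub_def] using this
  -- per-index sign condition
  have hterm : ∀ j : Fin N,
      (n1 j - n2 j) *
        ((∫ α, K j α * L (S α) ∂P) - (∫ α, K j α * L (T α) ∂P)) ≤ 0 := by
    intro j
    rcases eq_or_lt_of_le (hn1 j) with h1 | h1
    · rcases eq_or_lt_of_le (hn2 j) with h2 | h2
      · simp [← h1, ← h2]
      · -- n1 j = 0, n2 j > 0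
        have hle : r j ≤ ∫ α, K j α * L (S α) ∂P := hESS1ge j h1.symm
        have heq : ∫ α, K j α * L (T α) ∂P = r j := hESS2eq j h2
        apply mul_nonpos_of_nonpos_of_nonneg
        · linarith [hn2 j]
        · linarith
    · rcases eq_or_lt_of_le (hn2 j) with h2 | h2
      · -- n1 j > 0, n2 j = 0
        have heq : ∫ α, K j α * L (S α) ∂P = r j := hESS1eq j h1
        have hle : r j ≤ ∫ α, K j α * L (T α) ∂P := hESS2ge j h2.symm
        apply mul_nonpos_of_nonneg_of_nonpos
        · linarith
        · linarith
      · have e1 : ∫ α, K j α * L (S α) ∂P = r j := hESS1eq j h1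
        have e2 : ∫ α, K j α * L (T α) ∂P = r j := hESS2eq j h2
        simp [e1, e2]
  -- the key integral
  have hptwise : ∀ α, (S α - T α) * (L (S α) - L (T α)) =
      ∑ j, C j * (n1 j - n2 j) * (K j α * (L (S α) - L (T α))) := by
    intro α
    have : S α - T α = ∑ j, C j * (n1 j - n2 j) * K j α := by
      simp only [hSdef, hTdef, ← Finset.sum_sub_distrib]
      congr 1; funext j
      rw [hBK]; ring
    rw [this, Finset.sum_mul]
    congr 1; funext j; ring
  have hintprod : Integrable (fun α => (S α - T α) * (L (S α) - L (T α))) P := by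
    have : Integrable (fun α =>
        ∑ j, C j * (n1 j - n2 j) * (K j α * (L (S α) - L (T α)))) P :=
      integrable_finset_sum _ (fun j _ => (hintD j).const_mul _)
    exact this.congr (Eventually.of_forall fun α => (hptwise α).symm)
  have hIle : ∫ α, (S α - T α) * (L (S α) - L (T α)) ∂P ≤ 0 := by
    calc ∫ α, (S α - T α) * (L (S α) - L (T α)) ∂P
        = ∫ α, ∑ j, C j * (n1 j - n2 j) * (K j α * (L (S α) - L (T α))) ∂P := by
          exact integral_congr_ae (Eventually.of_forall hptwise)
      _ = ∑ j, C j * (n1 j - n2 j) *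
            ((∫ α, K j α * L (S α) ∂P) - (∫ α, K j α * L (T α) ∂P)) := by
          rw [integral_finset_sum _ (fun j _ => (hintD j).const_mul _)]
          congr 1; funext j
          rw [integral_const_mul]
          congr 1
          rw [show (∫ α, K j α * (L (S α) - L (T α)) ∂P)
              = ∫ α, (K j α * L (S α) - K j α * L (T α)) ∂P from
            integral_congr_ae (Eventually.of_forall fun α => by ring),
            integral_sub (hint1 j) (hint2 j)]
      _ ≤ 0 := by
          apply Finset.sum_nonpos
          intro j _
          have := hterm j
          have hCj := (hC j).le
          calc C j * (n1 j - n2 j) *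
              ((∫ α, K j α * L (S α) ∂P) - (∫ α, K j α * L (T α) ∂P))
              = C j * ((n1 j - n2 j) *
                ((∫ α, K j α * L (S α) ∂P) - (∫ α, K j α * L (T α) ∂P))) := by ring
            _ ≤ 0 := mul_nonpos_of_nonneg_of_nonpos hCj this
  have hnonneg : ∀ α, 0 ≤ (S α - T α) * (L (S α) - L (T α)) := by
    intro α
    rcases le_total (S α) (T α) with h | h
    · nlinarith [hLmono.monotone h]
    · exact mul_nonneg (by linarith) (by linarith [hLmono.monotone h])
  have hIzero : ∫ α, (S α - T α) * (L (S α) - L (T α)) ∂P = 0 :=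
    le_antisymm hIle (integral_nonneg hnonneg)
  have hae : (fun α => (S α - T α) * (L (S α) - L (T α))) =ᵐ[P] 0 := by
    rw [← integral_eq_zero_iff_of_nonneg hnonneg hintprod]
    exact hIzero
  have hST : S =ᵐ[P] T := by
    filter_upwards [hae] with α hα
    by_contra hne
    rcases lt_or_gt_of_ne hne with h | h
    · have h1 : S α - T α < 0 := by linarith
      have h2 : L (S α) - L (T α) < 0 := by linarith [hLmono h]
      have := mul_pos_of_neg_of_neg h1 h2
      simp only [Pi.zero_apply] at hα
      linarith
    · have h1 : 0 < S α - T α := by linarith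
      have h2 : 0 < L (S α) - L (T α) := by linarith [hLmono h]
      have := mul_pos h1 h2
      simp only [Pi.zero_apply] at hα
      linarith
  -- hence the integrals coincide
  have hintegrals : ∀ i, ∫ α, K i α * L (S α) ∂P = ∫ α, K i α * L (T α) ∂P := by
    intro i
    apply integral_congr_ae
    filter_upwards [hST] with α hα
    rw [hα]
  -- apply the non degeneracy hypothesis
  set I : Finset (Fin N) := Finset.univ.filter (fun i => n1 i ≠ 0 ∨ n2 i ≠ 0) with hI
  apply hnondeg I n1 n2
  · intro i hi
    simp only [hI, Finset.mem_filter, Finset.mem_univ, true_and] at hi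
    push_neg at hi
    exact hi.1
  · intro i hi
    simp only [hI, Finset.mem_filter, Finset.mem_univ, true_and] at hi
    push_neg at hi
    exact hi.2
  · intro i hi
    simp only [hI, Finset.mem_filter, Finset.mem_univ, true_and] at hi
    rcases hi with h | h
    · exact (hESS1eq i (lt_of_le_of_ne (hn1 i) (Ne.symm h))).symm
    · have := hESS2eq i (lt_of_le_of_ne (hn2 i) (Ne.symm h))
      rw [← hintegrals i] at this
      exact this.symm
  · intro i hi
    simp only [hI, Finset.mem_filter, Finset.mem_univ, true_and] at hi
    rcases hi with h | h
    · have := hESS1eq i (lt_of_le_of_ne (hn1 i) (Ne.symm h))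
      rw [hintegrals i] at this
      exact this.symm
    · exact (hESS2eq i (lt_of_le_of_ne (hn2 i) (Ne.symm h))).symm
end

section
/- Let ñ ∈ ℝ_+^N be a steady state of the system that is not an ESS, i.e. there exists an index i with λ_i := r_i − ∫_Ω K_i(α) L(Σ_{j=1}^N B_j(α) ñ_j) dP(α) > 0. Then no solution n(t) of the system with initial data satisfying n_i(0) > 0 for all i converges to ñ as t → +∞. -/
open MeasureTheory Filter Topology ENNReal

/-- If `ñ ∈ ℝ_+^N` is a steady state of the generalized competitive system which is not an
ESS (i.e. `λ_i := r_i − ∫ K_i L(Σ_j B_j ñ_j) dP > 0` for some `i`), then no solution with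
strictly positive initial data converges to `ñ`. -/
theorem non_ESS_steady_state_not_attracting
    {Ω : Type*} [MeasurableSpace Ω] (P : Measure Ω) {N : ℕ}
    (L : ℝ → ℝ) (hLC1 : ContDiff ℝ 1 L) (hLnonneg : ∀ x : ℝ, 0 ≤ x → 0 ≤ L x)
    (r : Fin N → ℝ) (K B : Fin N → Ω → ℝ)
    (hKnonneg : ∀ i α, 0 ≤ K i α) (hBnonneg : ∀ i α, 0 ≤ B i α)
    (hKL1 : ∀ i, Integrable (K i) P) (hKLinf : ∀ i, MemLp (K i) ⊤ P)
    (hBL1 : ∀ i, Integrable (B i) P) (hBLinf : ∀ i, MemLp (B i) ⊤ P)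
    -- a steady state which is not an ESS
    (ntilde : Fin N → ℝ) (hnt : ∀ i, 0 ≤ ntilde i)
    (hsteady : ∀ i, (r i - ∫ α, K i α * L (∑ j, B j α * ntilde j) ∂P) * ntilde i = 0)
    (hnotESS : ∃ i, 0 < r i - ∫ α, K i α * L (∑ j, B j α * ntilde j) ∂P)
    -- a solution with strictly positive initial data
    (n : ℝ → Fin N → ℝ) (h0 : ∀ i, 0 < n 0 i)
    (hsol : ∀ t : ℝ, 0 ≤ t → ∀ i, HasDerivAt (fun s => n s i)
      ((r i - ∫ α, K i α * L (∑ j, B j α * n t j) ∂P) * n t i) t) :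
    ¬ Filter.Tendsto n Filter.atTop (𝓝 ntilde) := by
  intro htend
  obtain ⟨i, hlam⟩ := hnotESS
  -- essential sup bounds for B
  set M : Fin N → ℝ := fun j => (eLpNormEssSup (B j) P).toReal with hMdef
  have hMnonneg : ∀ j, 0 ≤ M j := fun j => ENNReal.toReal_nonneg
  have hMae : ∀ᵐ α ∂P, ∀ j, ‖B j α‖ ≤ M j := by
    rw [ae_all_iff]
    intro j
    have h1 : ∀ᵐ α ∂P, (‖B j α‖₊ : ℝ≥0∞) ≤ eLpNormEssSup (B j) P :=
      ae_le_eLpNormEssSup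
    have htop : eLpNormEssSup (B j) P ≠ ⊤ := by
      have h2 := (hBLinf j).2
      rw [eLpNorm_exponent_top] at h2
      exact h2.ne
    filter_upwards [h1] with α hα
    have := ENNReal.toReal_le_toReal (by simp) htop |>.mpr hα
    simpa using this
  -- measurability of the integrand
  have hmeas : ∀ m : Fin N → ℝ,
      AEStronglyMeasurable (fun α => K i α * L (∑ j, B j α * m j)) P := by
    intro m
    refine (hKL1 i).aestronglyMeasurable.mul ?_
    exact hLC1.continuous.comp_aestronglyMeasurable
      (Finset.aestronglyMeasurable_fun_sum _ fun j _ =>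
        (hBL1 j).aestronglyMeasurable.mul_const (m j))
  -- key a.e. bound on the integrand
  have key : ∀ R : Fin N → ℝ, ∃ D : ℝ, 0 ≤ D ∧ ∀ m : Fin N → ℝ, (∀ j, |m j| ≤ R j) →
      ∀ᵐ α ∂P, ‖K i α * L (∑ j, B j α * m j)‖ ≤ D * K i α := by
    intro R
    set ρ : ℝ := ∑ j, M j * R j with hρdef
    obtain ⟨D, hD⟩ := isCompact_Icc.exists_bound_of_continuousOn
      (s := Set.Icc (-ρ) ρ) hLC1.continuous.continuousOn
    refine ⟨max D 0, le_max_right _ _, fun m hm => ?_⟩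
    filter_upwards [hMae] with α hα
    have hsum : |∑ j, B j α * m j| ≤ ρ := by
      calc |∑ j, B j α * m j| ≤ ∑ j, |B j α * m j| := Finset.abs_sum_le_sum_abs _ _
        _ ≤ ∑ j, M j * R j := by
            refine Finset.sum_le_sum fun j _ => ?_
            rw [abs_mul]
            exact mul_le_mul (by simpa using hα j) (hm j) (abs_nonneg _) (hMnonneg j)
    have hmem : (∑ j, B j α * m j) ∈ Set.Icc (-ρ) ρ := by
      rcases abs_le.mp hsum with ⟨h1, h2⟩; exact ⟨h1, h2⟩
    have : ‖L (∑ j, B j α * m j)‖ ≤ max D 0 := le_trans (hD _ hmem) (le_max_left _ _)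
    calc ‖K i α * L (∑ j, B j α * m j)‖ = K i α * ‖L (∑ j, B j α * m j)‖ := by
          rw [norm_mul, Real.norm_of_nonneg (hKnonneg i α)]
      _ ≤ K i α * max D 0 := by
          exact mul_le_mul_of_nonneg_left this (hKnonneg i α)
      _ = max D 0 * K i α := mul_comm _ _
  -- continuity of the solution components on [0, ∞)
  have hcontn : ∀ j, ∀ u : ℝ, 0 ≤ u → ContinuousAt (fun s => n s j) u :=
    fun j u hu => (hsol u hu j).continuousAt
  -- positivity of n t i for all t ≥ 0
  have hpos : ∀ t : ℝ, 0 ≤ t → 0 < n t i := by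
    intro t ht
    by_contra hcon
    push_neg at hcon
    -- find a zero
    have hcontI : ContinuousOn (fun s => n s i) (Set.Icc 0 t) :=
      fun s hs => (hcontn i s hs.1).continuousWithinAt
    have h0mem : (0 : ℝ) ∈ Set.Icc (n t i) (n 0 i) := ⟨hcon, (h0 i).le⟩
    obtain ⟨t0, ht0mem, ht0⟩ := intermediate_value_Icc' ht hcontI h0mem
    -- component bounds on [0, t]
    have hcontj : ∀ j, ContinuousOn (fun s => n s j) (Set.Icc 0 t) :=
      fun j s hs => (hcontn j s hs.1).continuousWithinAt
    choose Cb hCb using fun j =>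
      isCompact_Icc.exists_bound_of_continuousOn (hcontj j)
    obtain ⟨D, hDpos, hDkey⟩ := key Cb
    -- bound on the integral term for u ∈ [0, t]
    have hIbound : ∀ u ∈ Set.Icc (0:ℝ) t,
        |∫ α, K i α * L (∑ j, B j α * n u j) ∂P| ≤ D * ∫ α, K i α ∂P := by
      intro u hu
      have := norm_integral_le_of_norm_le ((hKL1 i).const_mul D)
        (hDkey (n u) (fun j => by simpa using hCb j u hu))
      rw [integral_const_mul] at this
      simpa using this
    set C : ℝ := |r i| + D * ∫ α, K i α ∂P with hCdef
    have habs : ∀ u ∈ Set.Icc (0:ℝ) t,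
        |r i - ∫ α, K i α * L (∑ j, B j α * n u j) ∂P| ≤ C := by
      intro u hu
      calc |r i - ∫ α, K i α * L (∑ j, B j α * n u j) ∂P|
          ≤ |r i| + |∫ α, K i α * L (∑ j, B j α * n u j) ∂P| := abs_sub _ _
        _ ≤ C := by have := hIbound u hu; rw [hCdef]; linarith
    -- Grönwall on the time-reversed function
    set f : ℝ → ℝ := fun s => n (t0 - s) i with hfdef
    have ht00 : 0 ≤ t0 := ht0mem.1
    have hsub : ∀ s ∈ Set.Icc (0:ℝ) t0, t0 - s ∈ Set.Icc (0:ℝ) t := by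
      intro s hs
      constructor
      · linarith [hs.2]
      · linarith [hs.1, ht0mem.2]
    have hfc : ContinuousOn f (Set.Icc 0 t0) := by
      intro s hs
      exact ((hcontn i (t0 - s) (hsub s hs).1).comp
        ((continuous_const.sub continuous_id).continuousAt)).continuousWithinAt
    have hfd : ∀ s ∈ Set.Ico (0:ℝ) t0, HasDerivWithinAt f
        (-((r i - ∫ α, K i α * L (∑ j, B j α * n (t0 - s) j) ∂P) * n (t0 - s) i))
        (Set.Ici s) s := by
      intro s hs
      have h1 : HasDerivAt (fun u : ℝ => t0 - u) (-1) s := by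
        simpa using (hasDerivAt_id s).const_sub t0
      have h2 := (hsol (t0 - s) (by linarith [hs.2]) i).comp s h1
      have : HasDerivAt f
          (-((r i - ∫ α, K i α * L (∑ j, B j α * n (t0 - s) j) ∂P) * n (t0 - s) i)) s := by
        rw [← mul_neg_one]; exact h2
      exact this.hasDerivWithinAt
    have hbnd : ∀ s ∈ Set.Ico (0:ℝ) t0,
        ‖-((r i - ∫ α, K i α * L (∑ j, B j α * n (t0 - s) j) ∂P) * n (t0 - s) i)‖
          ≤ C * ‖f s‖ + 0 := by
      intro s hs
      rw [norm_neg, norm_mul, add_zero]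
      have := habs (t0 - s) (hsub s ⟨hs.1, hs.2.le⟩)
      exact mul_le_mul_of_nonneg_right (by simpa using this) (norm_nonneg _)
    have hf00 : ‖f 0‖ ≤ (0:ℝ) := by
      have : f 0 = 0 := by simp only [hfdef, sub_zero]; exact ht0
      simp [this]
    have hgron := norm_le_gronwallBound_of_norm_deriv_right_le (δ := 0) hfc hfd hf00 hbnd
    have hft0 := hgron t0 ⟨ht00, le_refl t0⟩
    rw [gronwallBound_ε0_δ0] at hft0
    have : f t0 = n 0 i := by simp [hfdef]
    rw [this] at hft0
    have := h0 i
    simp only [Real.norm_eq_abs] at hft0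
    nlinarith [abs_nonneg (n 0 i), le_abs_self (n 0 i)]
  -- the component tends to ntilde i, which is 0
  have htendi : ∀ j, Tendsto (fun t => n t j) atTop (𝓝 (ntilde j)) :=
    fun j => tendsto_pi_nhds.mp htend j
  have hnt0 : ntilde i = 0 :=
    (mul_eq_zero.mp (hsteady i)).resolve_left (ne_of_gt hlam)
  -- dominated convergence: the growth rate tends to λ > 0
  obtain ⟨D2, hD2pos, hD2key⟩ := key (fun j => |ntilde j| + 1)
  have hbdd : ∀ᶠ t in atTop, ∀ j, |n t j| ≤ |ntilde j| + 1 := by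
    rw [eventually_all]
    intro j
    have := (htendi j).eventually (eventually_abs_sub_lt (ntilde j) one_pos)
    filter_upwards [this] with t h
    calc |n t j| = |ntilde j + (n t j - ntilde j)| := by ring_nf
      _ ≤ |ntilde j| + |n t j - ntilde j| := abs_add_le _ _
      _ ≤ |ntilde j| + 1 := by linarith [h.le]
  have hItend : Tendsto (fun t => ∫ α, K i α * L (∑ j, B j α * n t j) ∂P) atTop
      (𝓝 (∫ α, K i α * L (∑ j, B j α * ntilde j) ∂P)) := by
    refine tendsto_integral_filter_of_dominated_convergence (fun α => D2 * K i α)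
      (Eventually.of_forall fun t => hmeas (n t)) ?_ ((hKL1 i).const_mul D2) ?_
    · filter_upwards [hbdd] with t ht
      exact hD2key (n t) ht
    · refine Eventually.of_forall fun α => ?_
      have hs : Tendsto (fun t => ∑ j, B j α * n t j) atTop
          (𝓝 (∑ j, B j α * ntilde j)) :=
        tendsto_finset_sum _ fun j _ => (htendi j).const_mul (B j α)
      exact ((hLC1.continuous.tendsto _).comp hs).const_mul (K i α)
  have hatend : Tendsto (fun t => r i - ∫ α, K i α * L (∑ j, B j α * n t j) ∂P) atTop
      (𝓝 (r i - ∫ α, K i α * L (∑ j, B j α * ntilde j) ∂P)) :=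
    tendsto_const_nhds.sub hItend
  have hev : ∀ᶠ t in atTop,
      0 < r i - ∫ α, K i α * L (∑ j, B j α * n t j) ∂P :=
    hatend.eventually (eventually_gt_nhds hlam)
  obtain ⟨T0, hT0⟩ := eventually_atTop.mp hev
  set T : ℝ := max T0 0 with hTdef
  have hT0le : T0 ≤ T := le_max_left _ _
  have hTnonneg : 0 ≤ T := le_max_right _ _
  -- n · i is strictly increasing on [T, ∞), contradicting n t i → 0
  have hmono : StrictMonoOn (fun t => n t i) (Set.Ici T) := by
    refine strictMonoOn_of_deriv_pos (convex_Ici T) ?_ ?_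
    · intro s hs
      exact (hcontn i s (le_trans hTnonneg hs)).continuousWithinAt
    · intro x hx
      rw [interior_Ici] at hx
      have hx0 : 0 ≤ x := le_trans hTnonneg hx.le
      rw [(hsol x hx0 i).deriv]
      exact mul_pos (hT0 x (le_trans hT0le hx.le)) (hpos x hx0)
  have hevge : ∀ᶠ t in atTop, n T i ≤ n t i := by
    filter_upwards [eventually_gt_atTop T] with t ht
    exact (hmono (Set.self_mem_Ici) (Set.mem_Ici.mpr ht.le) ht).le
  have hle := ge_of_tendsto (htendi i) hevge
  rw [hnt0] at hle
  exact absurd hle (not_le.mpr (hpos T hTnonneg))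
end

section
/- Suppose that for some index i one has r_i > ∫_Ω K_i(α) L(∞) dP(α), where L(∞) := lim_{x→+∞} L(x) ∈ (0, +∞] is finite and L ≤ L(∞) on ℝ_+. Then every solution n(t) of the system with n_i(0) > 0 satisfies n_i(t) → +∞ as t → +∞. -/
open MeasureTheory Filter Topology ENNReal

lemma gron_zero_fwd {f g : ℝ → ℝ} {a b M : ℝ}
    (hf : ∀ t ∈ Set.Icc a b, HasDerivAt f (g t * f t) t)
    (hg : ∀ t ∈ Set.Icc a b, |g t| ≤ M)
    (ha : f a = 0) : ∀ t ∈ Set.Icc a b, f t = 0 := by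
  have hcont : ContinuousOn f (Set.Icc a b) := fun t ht =>
    (hf t ht).continuousAt.continuousWithinAt
  have key := norm_le_gronwallBound_of_norm_deriv_right_le (f' := fun t => g t * f t)
    (δ := 0) (K := M) (ε := 0) hcont
    (fun t ht => (hf t (Set.Ico_subset_Icc_self ht)).hasDerivWithinAt)
    (by simp [ha])
    (fun t ht => by
      rw [Real.norm_eq_abs, Real.norm_eq_abs, abs_mul, add_zero]
      exact mul_le_mul_of_nonneg_right (hg t (Set.Ico_subset_Icc_self ht)) (abs_nonneg _))
  intro t ht
  have h2 := key t ht
  rw [gronwallBound_ε0, zero_mul] at h2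
  simpa using le_antisymm h2 (norm_nonneg _)

lemma gron_zero_rev {f g : ℝ → ℝ} {a b M : ℝ} (hab : a ≤ b)
    (hf : ∀ t ∈ Set.Icc a b, HasDerivAt f (g t * f t) t)
    (hg : ∀ t ∈ Set.Icc a b, |g t| ≤ M)
    (hb : f b = 0) : f a = 0 := by
  have hmem : ∀ s ∈ Set.Icc a b, a + b - s ∈ Set.Icc a b := by
    intro s hs
    constructor <;> [linarith [hs.2]; linarith [hs.1]]
  have hF : ∀ s ∈ Set.Icc a b, HasDerivAt (fun u => f (a + b - u))
      ((-g (a + b - s)) * f (a + b - s)) s := by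
    intro s hs
    have h1 : HasDerivAt (fun u : ℝ => a + b - u) (-1) s := by
      simpa using (hasDerivAt_id s).const_sub (a + b)
    have := (hf _ (hmem s hs)).comp s h1
    convert this using 1
    · rfl
    · rfl
    · rfl
    · ring
  have := gron_zero_fwd (g := fun s => -g (a + b - s)) hF
    (fun s hs => by rw [abs_neg]; exact hg _ (hmem s hs))
    (by simpa using hb) b ⟨hab, le_refl b⟩
  simpa using this

/-- If for some index `i` one has `r_i > ∫ K_i(α) L(∞) dP(α)` where `L(∞)` is finite and
`L ≤ L(∞)` on `ℝ_+`, then every solution of the generalized competitive system with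
`n_i(0) > 0` (and nonnegative initial data) satisfies `n_i(t) → +∞`. -/
theorem explosion_of_supercritical_component
    {Ω : Type*} [MeasurableSpace Ω] (P : Measure Ω) {N : ℕ}
    (L : ℝ → ℝ) (hLC1 : ContDiff ℝ 1 L) (hLnonneg : ∀ x : ℝ, 0 ≤ x → 0 ≤ L x)
    (hLmono : MonotoneOn L (Set.Ici (0 : ℝ)))
    (r : Fin N → ℝ) (K B : Fin N → Ω → ℝ)
    (hKnonneg : ∀ i α, 0 ≤ K i α) (hBnonneg : ∀ i α, 0 ≤ B i α)
    (hKL1 : ∀ i, Integrable (K i) P) (hKLinf : ∀ i, MemLp (K i) ⊤ P)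
    (hBL1 : ∀ i, Integrable (B i) P) (hBLinf : ∀ i, MemLp (B i) ⊤ P)
    -- L(∞) finite, positive, and L ≤ L(∞) on ℝ_+
    (Linf : ℝ) (hLinfpos : 0 < Linf) (hLinf : Tendsto L atTop (𝓝 Linf))
    (hLle : ∀ x : ℝ, 0 ≤ x → L x ≤ Linf)
    -- the supercritical index
    (i : Fin N) (hri : ∫ α, K i α * Linf ∂P < r i)
    -- a solution with nonnegative initial data and n_i(0) > 0
    (n : ℝ → Fin N → ℝ) (h0 : ∀ j, 0 ≤ n 0 j) (h0i : 0 < n 0 i)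
    (hsol : ∀ t : ℝ, 0 ≤ t → ∀ k, HasDerivAt (fun s => n s k)
      ((r k - ∫ α, K k α * L (∑ j, B j α * n t j) ∂P) * n t k) t) :
    Filter.Tendsto (fun t => n t i) Filter.atTop Filter.atTop := by
  classical
  set g : Fin N → ℝ → ℝ := fun k t => r k - ∫ α, K k α * L (∑ j, B j α * n t j) ∂P with hg_def
  -- an essential-sup bound on B
  set S : Fin N → ℝ := fun j => (eLpNorm (B j) ⊤ P).toReal with hS_def
  have hS : ∀ᵐ α ∂P, ∀ j, B j α ≤ S j := by
    rw [ae_all_iff]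
    intro j
    filter_upwards [ae_le_eLpNormEssSup (f := B j) (μ := P)] with α hα
    have h1 : (‖B j α‖₊ : ℝ≥0∞) ≤ eLpNorm (B j) ⊤ P := by
      rw [eLpNorm_exponent_top]; exact_mod_cast hα
    calc B j α ≤ ‖B j α‖ := le_abs_self _
      _ = ((‖B j α‖₊ : ℝ≥0∞)).toReal := by simp
      _ ≤ S j := ENNReal.toReal_mono (hBLinf j).2.ne h1
  have hSnonneg : ∀ j, 0 ≤ S j := fun j => ENNReal.toReal_nonneg
  -- a bound on the coefficient functions g k on compact intervals
  have hMT : ∀ T : ℝ, 0 ≤ T → ∃ M : ℝ, ∀ k, ∀ t ∈ Set.Icc (0:ℝ) T, |g k t| ≤ M := by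
    intro T hT
    -- bound on the solution on [0, T]
    obtain ⟨R, hR⟩ : ∃ R : ℝ, ∀ t ∈ Set.Icc (0:ℝ) T, ∀ j, |n t j| ≤ R := by
      have hc : ContinuousOn (fun t => ∑ j, |n t j|) (Set.Icc (0:ℝ) T) := by
        apply continuousOn_finset_sum
        intro j _
        exact fun t ht => ((hsol t ht.1 j).continuousAt.continuousWithinAt).abs
      obtain ⟨R, hR⟩ := isCompact_Icc.exists_bound_of_continuousOn hc
      refine ⟨R, fun t ht j => ?_⟩
      have h1 : |n t j| ≤ ∑ j', |n t j'| :=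
        Finset.single_le_sum (f := fun j' => |n t j'|) (fun j' _ => abs_nonneg _)
          (Finset.mem_univ j)
      have h2 := hR t ht
      rw [Real.norm_eq_abs, abs_of_nonneg (Finset.sum_nonneg fun j' _ => abs_nonneg _)] at h2
      linarith
    have hRnonneg : 0 ≤ R := le_trans (abs_nonneg _) (hR 0 ⟨le_refl 0, hT⟩ i)
    set D : ℝ := (∑ j, S j) * R with hD_def
    have hDnonneg : 0 ≤ D :=
      mul_nonneg (Finset.sum_nonneg fun j _ => hSnonneg j) hRnonneg
    obtain ⟨C, hC⟩ := (isCompact_Icc (a := -D) (b := D)).exists_bound_of_continuousOn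
      hLC1.continuous.continuousOn
    have hCnonneg : 0 ≤ C := le_trans (norm_nonneg _) (hC 0 ⟨neg_nonpos_of_nonneg hDnonneg, hDnonneg⟩)
    refine ⟨(∑ k, |r k|) + C * ∑ k, ∫ α, K k α ∂P, fun k t ht => ?_⟩
    have hbound : ∀ᵐ α ∂P, ‖K k α * L (∑ j, B j α * n t j)‖ ≤ C * K k α := by
      filter_upwards [hS] with α hα
      have hmem : ∑ j, B j α * n t j ∈ Set.Icc (-D) D := by
        have habs : |∑ j, B j α * n t j| ≤ D := by
          calc |∑ j, B j α * n t j| ≤ ∑ j, |B j α * n t j| := Finset.abs_sum_le_sum_abs _ _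
            _ ≤ ∑ j, S j * R := by
                apply Finset.sum_le_sum
                intro j _
                rw [abs_mul, abs_of_nonneg (hBnonneg j α)]
                exact mul_le_mul (hα j) (hR t ht j) (abs_nonneg _) (hSnonneg j)
            _ = D := by rw [hD_def, Finset.sum_mul]
        exact abs_le.mp habs
      rw [Real.norm_eq_abs, abs_mul, abs_of_nonneg (hKnonneg k α), mul_comm C (K k α)]
      exact mul_le_mul_of_nonneg_left
        (by simpa [Real.norm_eq_abs] using hC _ hmem) (hKnonneg k α)
    have hint : |∫ α, K k α * L (∑ j, B j α * n t j) ∂P| ≤ C * ∫ α, K k α ∂P := by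
      calc |∫ α, K k α * L (∑ j, B j α * n t j) ∂P|
          ≤ ∫ α, ‖K k α * L (∑ j, B j α * n t j)‖ ∂P := by
            rw [← Real.norm_eq_abs]; exact norm_integral_le_integral_norm _
        _ ≤ ∫ α, C * K k α ∂P :=
            integral_mono_of_nonneg (Eventually.of_forall fun α => norm_nonneg _)
              ((hKL1 k).const_mul C) hbound
        _ = C * ∫ α, K k α ∂P := integral_const_mul _ _
    have hKk : ∫ α, K k α ∂P ≤ ∑ k', ∫ α, K k' α ∂P :=
      Finset.single_le_sum (f := fun k' => ∫ α, K k' α ∂P)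
        (fun k' _ => integral_nonneg fun α => hKnonneg k' α) (Finset.mem_univ k)
    have hrk : |r k| ≤ ∑ k', |r k'| :=
      Finset.single_le_sum (f := fun k' => |r k'|) (fun k' _ => abs_nonneg _)
        (Finset.mem_univ k)
    calc |g k t| ≤ |r k| + |∫ α, K k α * L (∑ j, B j α * n t j) ∂P| := abs_sub _ _
      _ ≤ (∑ k', |r k'|) + C * ∑ k', ∫ α, K k' α ∂P := by
          have := mul_le_mul_of_nonneg_left hKk hCnonneg
          linarith [hint]
  -- nonnegativity of all components, positivity of component i
  have hderiv : ∀ j, ∀ t ∈ Set.Ici (0:ℝ), HasDerivAt (fun s => n s j) (g j t * n t j) t :=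
    fun j t ht => hsol t ht j
  have hzero_of_zero : ∀ j, ∀ t : ℝ, 0 ≤ t → n t j = 0 → n 0 j = 0 := by
    intro j t ht hz
    obtain ⟨M, hM⟩ := hMT t ht
    exact gron_zero_rev (g := g j) ht
      (fun s hs => hderiv j s hs.1) (fun s hs => hM j s hs) hz
  have hnonneg : ∀ t : ℝ, 0 ≤ t → ∀ j, 0 ≤ n t j := by
    intro t ht j
    by_contra hneg
    push_neg at hneg
    rcases (h0 j).lt_or_eq with hpos | hzero
    · -- IVT gives a zero
      have hcont : ContinuousOn (fun s => n s j) (Set.Icc 0 t) := fun s hs =>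
        (hsol s hs.1 j).continuousAt.continuousWithinAt
      have : (0:ℝ) ∈ Set.Icc (n t j) (n 0 j) := ⟨le_of_lt hneg, le_of_lt hpos⟩
      obtain ⟨t₀, ht₀, hz⟩ := intermediate_value_Icc' ht hcont this
      exact absurd (hzero_of_zero j t₀ ht₀.1 hz) (ne_of_gt hpos)
    · obtain ⟨M, hM⟩ := hMT t ht
      have := gron_zero_fwd (g := g j) (fun s hs => hderiv j s hs.1)
        (fun s hs => hM j s hs) hzero.symm t ⟨ht, le_refl t⟩
      exact absurd this (ne_of_lt hneg)
  have hpos : ∀ t : ℝ, 0 ≤ t → 0 < n t i := by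
    intro t ht
    rcases (hnonneg t ht i).lt_or_eq with h | h
    · exact h
    · exact absurd (hzero_of_zero i t ht h.symm) (ne_of_gt h0i)
  -- the coefficient g i is bounded below by c > 0
  set c : ℝ := r i - ∫ α, K i α * Linf ∂P with hc_def
  have hcpos : 0 < c := sub_pos.mpr hri
  have hgi : ∀ t : ℝ, 0 ≤ t → c ≤ g i t := by
    intro t ht
    have hle : ∫ α, K i α * L (∑ j, B j α * n t j) ∂P ≤ ∫ α, K i α * Linf ∂P := by
      apply integral_mono_of_nonneg
      · exact Eventually.of_forall fun α => mul_nonneg (hKnonneg i α)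
          (hLnonneg _ (Finset.sum_nonneg fun j _ =>
            mul_nonneg (hBnonneg j α) (hnonneg t ht j)))
      · exact (hKL1 i).mul_const Linf
      · exact Eventually.of_forall fun α => mul_le_mul_of_nonneg_left
          (hLle _ (Finset.sum_nonneg fun j _ =>
            mul_nonneg (hBnonneg j α) (hnonneg t ht j))) (hKnonneg i α)
    simp only [hg_def]
    linarith
  -- the auxiliary function h t = n t i * exp (-(c * t)) is monotone on [0, ∞)
  set h : ℝ → ℝ := fun t => n t i * Real.exp (-(c * t)) with hh_def
  have hhd : ∀ t : ℝ, 0 ≤ t →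
      HasDerivAt h ((g i t - c) * (n t i * Real.exp (-(c * t)))) t := by
    intro t ht
    have he : HasDerivAt (fun s : ℝ => Real.exp (-(c * s))) (Real.exp (-(c * t)) * (-c)) t := by
      have : HasDerivAt (fun s : ℝ => -(c * s)) (-c) t := by
        exact (((hasDerivAt_id t).const_mul c).neg).congr_deriv (by simp)
      exact this.exp
    have := (hsol t ht i).mul he
    convert this using 1
    · rfl
    · rfl
    · rfl
    · simp only [g]
      ring
  have hmono : MonotoneOn h (Set.Ici (0:ℝ)) := by
    apply monotoneOn_of_deriv_nonneg (convex_Ici 0)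
    · exact fun t ht => (hhd t ht).continuousAt.continuousWithinAt
    · intro t ht
      rw [interior_Ici] at ht
      exact (hhd t (le_of_lt ht)).differentiableAt.differentiableWithinAt
    · intro t ht
      rw [interior_Ici] at ht
      rw [(hhd t (le_of_lt ht)).deriv]
      exact mul_nonneg (sub_nonneg.mpr (hgi t (le_of_lt ht)))
        (mul_nonneg (hnonneg t (le_of_lt ht) i) (Real.exp_nonneg _))
  have hlb : ∀ t : ℝ, 0 ≤ t → n 0 i * Real.exp (c * t) ≤ n t i := by
    intro t ht
    have h1 : h 0 ≤ h t := hmono (Set.self_mem_Ici) ht ht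
    have h2 : h 0 = n 0 i := by simp [hh_def]
    rw [h2, hh_def] at h1
    have h3 := mul_le_mul_of_nonneg_right h1 (Real.exp_nonneg (c * t))
    rwa [mul_assoc, ← Real.exp_add, neg_add_cancel, Real.exp_zero, mul_one] at h3
  apply tendsto_atTop_mono' atTop (f₁ := fun t => n 0 i * Real.exp (c * t))
  · filter_upwards [eventually_ge_atTop (0:ℝ)] with t ht using hlb t ht
  · exact Tendsto.const_mul_atTop h0i
      (Real.tendsto_exp_atTop.comp (Tendsto.const_mul_atTop hcpos tendsto_id))
end

section
/- Under hypotheses (i)-(iv), any steady state ñ ∈ ℝ_+^N of the system to which some solution with strictly positive initial data (n_i(0) > 0 for all i) converges must satisfy the ESS conditions: ∫_Ω K_i(α) L(Σ_{j=1}^N B_j(α) ñ_j) dP(α) = r_i for every i with ñ_i > 0, and ∫_Ω K_i(α) L(Σ_{j=1}^N B_j(α) ñ_j) dP(α) ≥ r_i for every i with ñ_i = 0. -/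
open MeasureTheory Filter Topology ENNReal

/-- Under hypotheses (i)-(iv), any steady state `ñ ∈ ℝ_+^N` of the generalized competitive
system to which some solution with strictly positive initial data converges must satisfy
the ESS conditions. -/
theorem limit_steady_state_is_ESS
    {Ω : Type*} [MeasurableSpace Ω] (P : Measure Ω) {N : ℕ}
    (L : ℝ → ℝ) (hLC1 : ContDiff ℝ 1 L) (hLnonneg : ∀ x : ℝ, 0 ≤ x → 0 ≤ L x)
    (r : Fin N → ℝ) (K B : Fin N → Ω → ℝ)
    (hKnonneg : ∀ i α, 0 ≤ K i α) (hBnonneg : ∀ i α, 0 ≤ B i α)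
    (hKL1 : ∀ i, Integrable (K i) P) (hKLinf : ∀ i, MemLp (K i) ⊤ P)
    (hBL1 : ∀ i, Integrable (B i) P) (hBLinf : ∀ i, MemLp (B i) ⊤ P)
    -- (i) strict competition
    (hLmono : StrictMono L) (Linf : ℝ≥0∞) (hLinfpos : 0 < Linf)
    (hLinf : Tendsto (fun x => (L x : EReal)) atTop (𝓝 (Linf : EReal)))
    (hstrict : ∀ i, (r i : EReal) <
      ((∫⁻ α, ENNReal.ofReal (K i α) * Linf ∂P : ℝ≥0∞) : EReal))
    -- (ii) symmetry
    (C : Fin N → ℝ) (hC : ∀ i, 0 < C i) (hBK : ∀ i α, B i α = C i * K i α)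
    -- (iii) non extinction
    (hnonext : ∀ i, ∫ α, K i α * L 0 ∂P < r i)
    -- (iv) non degeneracy
    (hnondeg : ∀ I : Finset (Fin N), ∀ n m : Fin N → ℝ,
      (∀ i ∉ I, n i = 0) → (∀ i ∉ I, m i = 0) →
      (∀ i ∈ I, r i = ∫ α, K i α * L (∑ j, B j α * n j) ∂P) →
      (∀ i ∈ I, r i = ∫ α, K i α * L (∑ j, B j α * m j) ∂P) →
      n = m)
    -- a steady state
    (ntilde : Fin N → ℝ) (hnt : ∀ i, 0 ≤ ntilde i)
    (hsteady : ∀ i, (r i - ∫ α, K i α * L (∑ j, B j α * ntilde j) ∂P) * ntilde i = 0)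
    -- to which some solution with strictly positive initial data converges
    (hconv : ∃ n : ℝ → Fin N → ℝ, (∀ i, 0 < n 0 i) ∧
      (∀ t : ℝ, 0 ≤ t → ∀ i, HasDerivAt (fun s => n s i)
        ((r i - ∫ α, K i α * L (∑ j, B j α * n t j) ∂P) * n t i) t) ∧
      Filter.Tendsto n Filter.atTop (𝓝 ntilde)) :
    (∀ i, 0 < ntilde i → ∫ α, K i α * L (∑ j, B j α * ntilde j) ∂P = r i) ∧
    (∀ i, ntilde i = 0 → r i ≤ ∫ α, K i α * L (∑ j, B j α * ntilde j) ∂P) := by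
  obtain ⟨n, hpos0, hderiv, htend⟩ := hconv
  -- a.e. bounds for the B j
  set D : Fin N → ℝ := fun j => (eLpNormEssSup (B j) P).toReal with hDdef
  have hDS : ∀ᵐ α ∂P, ∀ j, B j α ≤ D j := by
    rw [ae_all_iff]
    intro j
    have hfin : eLpNormEssSup (B j) P ≠ ⊤ := by
      have h2 := (hBLinf j).2
      rw [eLpNorm_exponent_top] at h2
      exact h2.ne
    filter_upwards [ae_le_eLpNormEssSup (f := B j) (μ := P)] with α hα
    have : ‖B j α‖ ≤ D j := by
      have := ENNReal.toReal_mono hfin hα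
      simpa using this
    calc B j α ≤ |B j α| := le_abs_self _
      _ = ‖B j α‖ := (Real.norm_eq_abs _).symm
      _ ≤ D j := this
  have hDnonneg : ∀ j, 0 ≤ D j := fun j => ENNReal.toReal_nonneg
  -- measurability of integrands
  have hmeasSum : ∀ x : Fin N → ℝ,
      AEStronglyMeasurable (fun α => ∑ j, B j α * x j) P := fun x =>
    Finset.aestronglyMeasurable_fun_sum Finset.univ
      (fun j _ => (hBL1 j).aestronglyMeasurable.mul_const (x j))
  have hAESM : ∀ (i : Fin N) (x : Fin N → ℝ),
      AEStronglyMeasurable (fun α => K i α * L (∑ j, B j α * x j)) P := fun i x =>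
    (hKL1 i).aestronglyMeasurable.mul
      (hLC1.continuous.comp_aestronglyMeasurable (hmeasSum x))
  -- a.e. domination of the integrand for bounded populations
  have hLbd : ∀ R : ℝ, 0 ≤ R → ∃ M : ℝ, 0 ≤ M ∧ ∀ x : Fin N → ℝ, ‖x‖ ≤ R →
      ∀ i, (∀ᵐ α ∂P, ‖K i α * L (∑ j, B j α * x j)‖ ≤ M * K i α) := by
    intro R hR
    set c := (∑ j, D j) * R with hc
    obtain ⟨ML, hML⟩ := (isCompact_Icc (a := -c) (b := c)).exists_bound_of_continuousOn
      hLC1.continuous.continuousOn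
    refine ⟨max ML 0, le_max_right _ _, ?_⟩
    intro x hx i
    filter_upwards [hDS] with α hα
    have hmem : ∑ j, B j α * x j ∈ Set.Icc (-c) c := by
      have habs : |∑ j, B j α * x j| ≤ c := by
        calc |∑ j, B j α * x j| ≤ ∑ j, |B j α * x j| := Finset.abs_sum_le_sum_abs _ _
          _ ≤ ∑ j, D j * R := by
              refine Finset.sum_le_sum fun j _ => ?_
              rw [abs_mul, abs_of_nonneg (hBnonneg j α)]
              have hxj : |x j| ≤ R := le_trans (by
                simpa [Real.norm_eq_abs] using norm_le_pi_norm x j) hx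
              exact mul_le_mul (hα j) hxj (abs_nonneg _)
                (le_trans (hBnonneg j α) (hα j))
          _ = c := by rw [hc, Finset.sum_mul]
      exact abs_le.mp habs
    have hLle : ‖L (∑ j, B j α * x j)‖ ≤ max ML 0 :=
      le_trans (hML _ hmem) (le_max_left _ _)
    calc ‖K i α * L (∑ j, B j α * x j)‖
        = ‖K i α‖ * ‖L (∑ j, B j α * x j)‖ := norm_mul _ _
      _ ≤ ‖K i α‖ * max ML 0 := by
          exact mul_le_mul_of_nonneg_left hLle (norm_nonneg _)
      _ = max ML 0 * K i α := by
          rw [Real.norm_eq_abs, abs_of_nonneg (hKnonneg i α), mul_comm]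
  -- norm bound on the integral
  have hIbd : ∀ R : ℝ, 0 ≤ R → ∃ Mi : ℝ, ∀ x : Fin N → ℝ, ‖x‖ ≤ R → ∀ i,
      ‖∫ α, K i α * L (∑ j, B j α * x j) ∂P‖ ≤ Mi := by
    intro R hR
    obtain ⟨M, hM0, hM⟩ := hLbd R hR
    refine ⟨∑ i, M * ∫ α, K i α ∂P, fun x hx i => ?_⟩
    have h1 : ‖∫ α, K i α * L (∑ j, B j α * x j) ∂P‖ ≤ ∫ α, M * K i α ∂P :=
      norm_integral_le_of_norm_le ((hKL1 i).const_mul M) (hM x hx i)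
    refine le_trans h1 ?_
    rw [integral_const_mul]
    exact Finset.single_le_sum (f := fun i => M * ∫ α, K i α ∂P)
      (fun j _ => mul_nonneg hM0 (integral_nonneg (fun α => hKnonneg j α)))
      (Finset.mem_univ i)
  -- positivity of solutions for all times
  have hpos : ∀ t : ℝ, 0 ≤ t → ∀ i, 0 < n t i := by
    have hne : ∀ i, ∀ s : ℝ, 0 ≤ s → n s i ≠ 0 := by
      intro i s hs hs0
      -- continuity of the full solution on [0, s]
      have hcn : ContinuousOn (fun t => n t) (Set.Icc 0 s) := by
        refine continuousOn_pi.mpr fun j => fun t ht => ?_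
        exact (hderiv t ht.1 j).continuousAt.continuousWithinAt
      obtain ⟨R0, hR0⟩ := (isCompact_Icc (a := (0:ℝ)) (b := s)).exists_bound_of_continuousOn hcn
      set R := max R0 0 with hRdef
      obtain ⟨Mi, hMi⟩ := hIbd R (le_max_right _ _)
      set g : ℝ → ℝ := fun t => r i - ∫ α, K i α * L (∑ j, B j α * n t j) ∂P with hgdef
      set Kc := |r i| + Mi with hKcdef
      have hgbd : ∀ t ∈ Set.Icc (0:ℝ) s, |g t| ≤ Kc := by
        intro t ht
        have hnb : ‖n t‖ ≤ R := le_trans (hR0 t ht) (le_max_left _ _)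
        have := hMi (n t) hnb i
        calc |g t| ≤ |r i| + ‖∫ α, K i α * L (∑ j, B j α * n t j) ∂P‖ := by
              rw [hgdef]; simpa [Real.norm_eq_abs] using abs_sub (r i) _
          _ ≤ Kc := by rw [hKcdef]; linarith
      set f : ℝ → ℝ := fun t => n (s - t) i with hfdef
      have hf' : ∀ t ∈ Set.Icc (0:ℝ) s, HasDerivAt f (-(g (s - t) * n (s - t) i)) t := by
        intro t ht
        have hst : 0 ≤ s - t := by linarith [ht.2]
        have h1 : HasDerivAt (fun u => n u i) (g (s - t) * n (s - t) i) (s - t) :=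
          hderiv (s - t) hst i
        have h2 : HasDerivAt (fun t : ℝ => s - t) (-1) t := (hasDerivAt_id t).const_sub s
        have h3 := h1.comp t h2
        simpa [hfdef, mul_comm, mul_neg_one, Function.comp_def] using h3
      have hfc : ContinuousOn f (Set.Icc 0 s) := fun t ht =>
        ((hf' t ht).continuousAt).continuousWithinAt
      have hgron := norm_le_gronwallBound_of_norm_deriv_right_le
        (f := f) (f' := fun t => -(g (s - t) * f t)) (δ := 0) (K := Kc) (ε := 0)
        (a := 0) (b := s) hfc
        (fun t ht => ((hf' t (Set.Ico_subset_Icc_self ht)).hasDerivWithinAt))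
        (by simp [hfdef, hs0])
        (by
          intro t ht
          have hmem : s - t ∈ Set.Icc (0:ℝ) s := ⟨by linarith [ht.2], by linarith [ht.1]⟩
          have := hgbd (s - t) hmem
          calc ‖-(g (s - t) * f t)‖ = |g (s - t)| * ‖f t‖ := by
                rw [norm_neg, norm_mul, Real.norm_eq_abs]
            _ ≤ Kc * ‖f t‖ + 0 := by
                have := mul_le_mul_of_nonneg_right this (norm_nonneg (f t))
                linarith)
      have hend := hgron s ⟨hs, le_refl s⟩
      rw [gronwallBound_ε0_δ0] at hend
      have : f s = n 0 i := by simp [hfdef]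
      rw [this] at hend
      have := hpos0 i
      have : ‖n 0 i‖ = 0 := le_antisymm hend (norm_nonneg _)
      rw [Real.norm_eq_abs, abs_eq_zero] at this
      linarith [hpos0 i]
    intro t ht i
    by_contra hle
    push_neg at hle
    have hlt : n t i < 0 := lt_of_le_of_ne hle (hne i t ht)
    have hcn : ContinuousOn (fun u => n u i) (Set.Icc 0 t) := fun u hu =>
      (hderiv u hu.1 i).continuousAt.continuousWithinAt
    have hsub := intermediate_value_Icc' ht hcn
    have h0mem : (0:ℝ) ∈ Set.Icc (n t i) (n 0 i) := ⟨le_of_lt hlt, le_of_lt (hpos0 i)⟩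
    obtain ⟨u, hu, hu0⟩ := hsub h0mem
    exact hne i u hu.1 hu0
  constructor
  · intro i hi
    rcases mul_eq_zero.mp (hsteady i) with h1 | h1
    · exact (sub_eq_zero.mp h1).symm
    · exact absurd h1 hi.ne'
  · intro i hi0
    by_contra hcon
    push_neg at hcon
    -- convergence of the competition integral along the trajectory
    have htendi : ∀ j, Tendsto (fun t => n t j) atTop (𝓝 (ntilde j)) :=
      fun j => tendsto_pi_nhds.mp htend j
    have hItend : Tendsto (fun t => ∫ α, K i α * L (∑ j, B j α * n t j) ∂P) atTop
        (𝓝 (∫ α, K i α * L (∑ j, B j α * ntilde j) ∂P)) := by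
      obtain ⟨M, hM0, hMb⟩ := hLbd (‖ntilde‖ + 1) (by positivity)
      have hev : ∀ᶠ t in atTop, ‖n t‖ ≤ ‖ntilde‖ + 1 :=
        (htend.norm).eventually_le_const (lt_add_one ‖ntilde‖)
      refine tendsto_integral_filter_of_dominated_convergence (fun α => M * K i α)
        (Eventually.of_forall fun t => hAESM i (n t))
        (hev.mono fun t ht => hMb (n t) ht i)
        ((hKL1 i).const_mul M)
        (ae_of_all _ fun α => ?_)
      have h1 : Tendsto (fun t => ∑ j, B j α * n t j) atTop
          (𝓝 (∑ j, B j α * ntilde j)) :=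
        tendsto_finset_sum _ (fun j _ => tendsto_const_nhds.mul (htendi j))
      exact tendsto_const_nhds.mul ((hLC1.continuous.tendsto _).comp h1)
    have hgev : ∀ᶠ t in atTop, ∫ α, K i α * L (∑ j, B j α * n t j) ∂P < r i :=
      hItend.eventually_lt_const hcon
    obtain ⟨T0, hT0⟩ := eventually_atTop.mp hgev
    set T := max T0 0 with hTdef
    have hT0' : (0:ℝ) ≤ T := le_max_right _ _
    have hmono : StrictMonoOn (fun t => n t i) (Set.Ici T) := by
      refine strictMonoOn_of_deriv_pos (convex_Ici T)
        (fun t ht => (hderiv t (le_trans hT0' ht) i).continuousAt.continuousWithinAt) ?_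
      intro t ht
      rw [interior_Ici] at ht
      have ht0 : (0:ℝ) ≤ t := le_trans hT0' (le_of_lt ht)
      have hd := hderiv t ht0 i
      rw [hd.deriv]
      refine mul_pos (sub_pos.mpr (hT0 t (le_of_lt (lt_of_le_of_lt (le_max_left _ _) ht))))
        (hpos t ht0 i)
    have hTpos : 0 < n T i := hpos T hT0' i
    have hle : n T i ≤ ntilde i := by
      refine ge_of_tendsto (htendi i) ?_
      filter_upwards [eventually_gt_atTop T] with t htg
      exact le_of_lt (hmono (Set.self_mem_Ici) (le_of_lt htg) htg)
    rw [hi0] at hle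
    linarith
end
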